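/- Let F be a commutative unital ring and let (A,[,]_A,ρ) be a generalized Lie algebra over F. If there exist u, v ∈ A such that ρ([u,v]_A) ≠ ρ(u)∘ρ(v) − ρ(v)∘ρ(u), then A is not a faithful F-module, i.e. there exist f, g ∈ F with f ≠ g and f·w = g·w for all w ∈ A. -/
import Mathlib


/-- If `(A, [,], ρ)` is a generalized Lie algebra over a commutative
unital ring `F` and there exist `u, v ∈ A` whose bracket is not sent by the anchor `ρ`
to the commutator `ρ(u) ∘ ρ(v) − ρ(v) ∘ ρ(u)`, then `A` is not a faithful `F`-module:
there exist `f ≠ g` in `F` acting identically on `A`. -/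
theorem generalizedLieAlgebra_not_faithful_of_anchor_not_bracket_preserving
    {F : Type*} [CommRing F] {A : Type*} [AddCommGroup A] [Module F A]
    (bracket : A → A → A)
    (hadd_left : ∀ u v w : A, bracket (u + v) w = bracket u w + bracket v w)
    (hadd_right : ∀ u v w : A, bracket u (v + w) = bracket u v + bracket u w)
    (halt : ∀ u : A, bracket u u = 0)
    (hjacobi : ∀ u v z : A,
      bracket u (bracket v z) + bracket z (bracket u v) + bracket v (bracket z u) = 0)
    (ρ : A →ₗ[F] Derivation ℤ F F)
    (hcompat : ∀ (u v : A) (f : F), bracket u (f • v) = f • bracket u v + (ρ u f) • v)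
    (h : ∃ u v : A, ∃ f : F, ρ (bracket u v) f ≠ ρ u (ρ v f) - ρ v (ρ u f)) :
    ∃ f g : F, f ≠ g ∧ ∀ w : A, f • w = g • w := by
  obtain ⟨u, v, f, hne⟩ := h
  -- antisymmetry
  have hanti : ∀ x y : A, bracket x y = - bracket y x := by
    intro x y
    have h0 := halt (x + y)
    rw [hadd_left, hadd_right, hadd_right, halt, halt, zero_add, add_zero] at h0
    exact eq_neg_of_add_eq_zero_left h0
  have hzero : ∀ x : A, bracket x 0 = 0 := by
    intro x
    have h00 := hadd_right x 0 0
    rw [add_zero] at h00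
    exact (left_eq_add.mp h00)
  have hneg : ∀ x y : A, bracket x (-y) = - bracket x y := by
    intro x y
    have h0 := hadd_right x y (-y)
    rw [add_neg_cancel, hzero] at h0
    exact eq_neg_of_add_eq_zero_right h0.symm
  have key : ∀ w : A, (ρ u (ρ v f) - ρ v (ρ u f) - ρ (bracket u v) f) • w = 0 := by
    intro w
    have J := hjacobi u v (f • w)
    have e2 : bracket u (bracket v (f • w)) =
        f • bracket u (bracket v w) + ρ u f • bracket v w + ρ v f • bracket u w
          + ρ u (ρ v f) • w := by
      rw [hcompat v w f, hadd_right, hcompat, hcompat]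
      abel
    have e3 : bracket (f • w) (bracket u v) =
        - (f • bracket (bracket u v) w + ρ (bracket u v) f • w) := by
      rw [hanti, hcompat]
    have e4 : bracket v (bracket (f • w) u) =
        - (f • bracket v (bracket u w) + ρ v f • bracket u w + ρ u f • bracket v w
          + ρ v (ρ u f) • w) := by
      have h1 : bracket (f • w) u = - (f • bracket u w + ρ u f • w) := by
        rw [hanti, hcompat]
      rw [h1, hneg, hadd_right, hcompat, hcompat]
      abel
    rw [e2, e3, e4] at J
    -- Jacobi identity for u, v, w
    have hx : bracket u (bracket v w)
        = bracket (bracket u v) w + bracket v (bracket u w) := by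
      have h0 := hjacobi u v w
      rw [hanti w (bracket u v), hanti w u, hneg] at h0
      refine eq_of_sub_eq_zero ?_
      rw [show bracket u (bracket v w) - (bracket (bracket u v) w + bracket v (bracket u w))
          = bracket u (bracket v w) + -bracket (bracket u v) w + -bracket v (bracket u w)
          from by abel]
      exact h0
    have hfx : f • bracket u (bracket v w)
        = f • bracket (bracket u v) w + f • bracket v (bracket u w) := by
      rw [hx, smul_add]
    rw [hfx] at J
    rw [sub_smul, sub_smul]
    abel_nf at J ⊢
    exact J
  refine ⟨ρ u (ρ v f) - ρ v (ρ u f) - ρ (bracket u v) f, 0, ?_, fun w => by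
    rw [zero_smul, key w]⟩
  intro hc
  apply hne
  linear_combination -hc
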